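/- Let Σ ∈ M_{d×d}, q ∈ [n]^d, let H = (π_{Σ,q}, B, F) be a hashing with filter G, let x' ∈ ℂ^{[n]^d}, and let i ∈ [n]^d be such that G_{o_i(i)} ≠ 0. If a is drawn uniformly at random from [n]^d, then E_a[ | G_{o_i(i)}^{−1} · ω^{−a^T Σ i} · Σ_{j∈[n]^d} G_{o_i(j)} x'_j ω^{a^T Σ j} − x'_i |² ] = G_{o_i(i)}^{−2} · Σ_{j∈[n]^d∖{i}} G_{o_i(j)}² |x'_j|². -/

import Mathlib

set_option linter.unusedSectionVars false
set_option linter.unusedVariables false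
set_option maxHeartbeats 1000000


/- STATEMENT 8: Let Σ ∈ M_{d×d}, q ∈ [n]^d, H = (π_{Σ,q}, B, F) a hashing with filter G,
   x' ∈ ℂ^{[n]^d}, and i ∈ [n]^d with G_{o_i(i)} ≠ 0. If a is uniform on [n]^d, then
   E_a[ |G_{o_i(i)}⁻¹ · ω^{−aᵀΣi} · Σ_j G_{o_i(j)} x'_j ω^{aᵀΣj} − x'_i|² ]
     = G_{o_i(i)}⁻² · Σ_{j≠i} G_{o_i(j)}² |x'_j|². -/

open scoped BigOperators Classical
open Finset

noncomputable def fe (n : ℕ) (t : ZMod n) : ℂ :=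
  Complex.exp (2 * (Real.pi : ℂ) * Complex.I * ((t.val : ℕ) : ℂ) / (n : ℂ))

def fdot {n d : ℕ} (i j : Fin d → ZMod n) : ZMod n := ∑ s, i s * j s

def fperm {n d : ℕ} (M : Matrix (Fin d) (Fin d) (ZMod n)) (q : Fin d → ZMod n)
    (i : Fin d → ZMod n) : Fin d → ZMod n := M.mulVec (i - q)

def bucketPt {n d : ℕ} (nb : ℕ) (v : Fin d → ZMod n) : Fin d → ZMod n :=
  fun s => ((nb * ((v s).val / nb) : ℕ) : ZMod n)

/-- the offset o_i(j) = π(j) − (n/b)·h(i), with nb = n/b -/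
def opos {n d : ℕ} (nb : ℕ) (M : Matrix (Fin d) (Fin d) (ZMod n)) (q : Fin d → ZMod n)
    (i j : Fin d → ZMod n) : Fin d → ZMod n :=
  fperm M q j - bucketPt nb (fperm M q i)

section helpers
variable {n : ℕ} [NeZero n]

noncomputable def gexp (n : ℕ) (a : ℕ) : ℂ :=
  Complex.exp (2 * (Real.pi : ℂ) * Complex.I * (a : ℂ) / (n : ℂ))

lemma fe_def (t : ZMod n) : fe n t = gexp n t.val := rfl

lemma gexp_add (a b : ℕ) : gexp n (a + b) = gexp n a * gexp n b := by
  rw [gexp, gexp, gexp, ← Complex.exp_add]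
  congr 1; push_cast; ring

lemma gexp_nmul (k : ℕ) : gexp n (n * k) = 1 := by
  have hn : (n : ℂ) ≠ 0 := Nat.cast_ne_zero.mpr (NeZero.ne n)
  rw [gexp]
  have : 2 * (Real.pi : ℂ) * Complex.I * ((n * k : ℕ) : ℂ) / (n : ℂ)
      = (k : ℤ) * (2 * (Real.pi : ℂ) * Complex.I) := by
    push_cast; field_simp
  rw [this, Complex.exp_int_mul_two_pi_mul_I]

lemma gexp_mod (a : ℕ) : gexp n (a % n) = gexp n a := by
  conv_rhs => rw [← Nat.div_add_mod a n]
  rw [gexp_add, gexp_nmul, one_mul]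

lemma fe_add (s t : ZMod n) : fe n (s + t) = fe n s * fe n t := by
  rw [fe_def, fe_def, fe_def, ZMod.val_add, gexp_mod, gexp_add]

lemma fe_zero : fe n 0 = 1 := by
  rw [fe_def, ZMod.val_zero, gexp]; simp

lemma fe_neg (t : ZMod n) : fe n (-t) = (fe n t)⁻¹ := by
  apply eq_inv_of_mul_eq_one_left
  rw [← fe_add, neg_add_cancel, fe_zero]

lemma abs_fe (t : ZMod n) : ‖fe n t‖ = 1 := by
  rw [fe_def, gexp, Complex.norm_exp]
  have : (2 * (Real.pi : ℂ) * Complex.I * ((t.val : ℕ) : ℂ) / (n : ℂ))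
      = ((2 * Real.pi * t.val / n : ℝ) : ℂ) * Complex.I := by push_cast; ring
  rw [this]
  simp

lemma conj_fe (t : ZMod n) : (starRingEnd ℂ) (fe n t) = fe n (-t) := by
  rw [fe_neg, Complex.inv_eq_conj (abs_fe t)]

lemma fe_ne_one {t : ZMod n} (ht : t ≠ 0) : fe n t ≠ 1 := by
  have hv1 : 0 < t.val := ZMod.val_pos.mpr ht
  have hv2 : t.val < n := t.val_lt
  intro h
  rw [fe_def, gexp, Complex.exp_eq_one_iff] at h
  obtain ⟨k, hk⟩ := h
  have hn : (n : ℂ) ≠ 0 := Nat.cast_ne_zero.mpr (NeZero.ne n)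
  have hpi : (Real.pi : ℂ) ≠ 0 := by exact_mod_cast Real.pi_ne_zero
  have hI := Complex.I_ne_zero
  have h2 : ((t.val : ℕ) : ℂ) = (k : ℂ) * n := by
    have h2pi : (2 * (Real.pi : ℂ) * Complex.I) ≠ 0 := by
      simp [hpi, Complex.I_ne_zero]
    rw [div_eq_iff hn] at hk
    apply mul_left_cancel₀ h2pi
    linear_combination hk
  have h3 : (t.val : ℤ) = k * n := by exact_mod_cast h2
  have hb1 : (0:ℤ) < t.val := by exact_mod_cast hv1
  have hb2 : (t.val:ℤ) < n := by exact_mod_cast hv2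
  have hnpos : (0:ℤ) < n := by exact_mod_cast Nat.pos_of_ne_zero (NeZero.ne n)
  have hkpos : 0 < k := by
    by_contra hc
    push_neg at hc
    have : k * n ≤ 0 := mul_nonpos_of_nonpos_of_nonneg hc hnpos.le
    omega
  have : (n:ℤ) ≤ k * n := le_mul_of_one_le_left hnpos.le hkpos
  omega

lemma fdot_add_left {d : ℕ} (a b v : Fin d → ZMod n) :
    fdot (a + b) v = fdot a v + fdot b v := by
  simp [fdot, add_mul, Finset.sum_add_distrib]

lemma fdot_sub_right {d : ℕ} (a x y : Fin d → ZMod n) :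
    fdot a (x - y) = fdot a x - fdot a y := by
  simp [fdot, mul_sub, Finset.sum_sub_distrib]

noncomputable def psiC (n d : ℕ) [NeZero n] (v : Fin d → ZMod n) :
    AddChar (Fin d → ZMod n) ℂ where
  toFun a := fe n (fdot a v)
  map_zero_eq_one' := by
    have : fdot (0 : Fin d → ZMod n) v = 0 := by simp [fdot]
    simp [this, fe_zero]
  map_add_eq_mul' a b := by
    show fe n (fdot (a + b) v) = fe n (fdot a v) * fe n (fdot b v)
    rw [fdot_add_left, fe_add]

lemma sum_fe_fdot {d : ℕ} (v : Fin d → ZMod n) :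
    ∑ a : Fin d → ZMod n, fe n (fdot a v) = if v = 0 then ((n : ℂ)) ^ d else 0 := by
  split_ifs with hv
  · subst hv
    have : ∀ a : Fin d → ZMod n, fdot a (0 : Fin d → ZMod n) = 0 := by simp [fdot]
    simp [this, fe_zero, Finset.card_univ]
  · have hne : (psiC n d v) ≠ 0 := by
      rw [AddChar.ne_zero_iff]
      obtain ⟨s, hs⟩ : ∃ s, v s ≠ 0 := by
        by_contra hc; push_neg at hc
        exact hv (funext hc)
      refine ⟨Pi.single s 1, ?_⟩
      have : fdot (Pi.single s 1) v = v s := by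
        simp [fdot, Pi.single_apply, ite_mul]
      show fe n (fdot (Pi.single s 1) v) ≠ 1
      rw [this]
      exact fe_ne_one hs
    exact AddChar.sum_eq_zero_iff_ne_zero.mpr hne

end helpers

theorem stmt8 {n d mn : ℕ} [NeZero n] (hn : n = 2 ^ mn) (hd : 1 ≤ d)
    (b mb F : ℕ) (hb : b = 2 ^ mb) (hbn : b ∣ n)
    (M : Matrix (Fin d) (Fin d) (ZMod n)) (hM : Odd (Matrix.det M).val)
    (q : Fin d → ZMod n) (G : (Fin d → ZMod n) → ℝ)
    (x' : (Fin d → ZMod n) → ℂ) (i : Fin d → ZMod n)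
    (hG : G (opos (n / b) M q i i) ≠ 0) :
    (∑ a : Fin d → ZMod n,
        ‖(((G (opos (n / b) M q i i) : ℝ) : ℂ)⁻¹ * fe n (-(fdot a (M.mulVec i))) *
              (∑ j, ((G (opos (n / b) M q i j) : ℝ) : ℂ) * x' j * fe n (fdot a (M.mulVec j)))
            - x' i)‖ ^ 2) / (n : ℝ) ^ d
      = (G (opos (n / b) M q i i))⁻¹ ^ 2 *
          ∑ j ∈ univ.erase i, G (opos (n / b) M q i j) ^ 2 * ‖x' j‖ ^ 2 := by
  classical
  have hdet : IsUnit M.det := by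
    have h1 : M.det = (((M.det).val : ℕ) : ZMod n) := by
      rw [ZMod.natCast_val, ZMod.cast_id]
    rw [h1, ZMod.isUnit_iff_coprime]
    have h3 := Nat.Coprime.pow_right mn (Nat.coprime_two_right.mpr hM)
    rwa [← hn] at h3
  have hinj : ∀ v : Fin d → ZMod n, M.mulVec v = 0 → v = 0 := by
    intro v hv
    have h1 : (M⁻¹ * M).mulVec v = v := by
      rw [Matrix.nonsing_inv_mul M hdet, Matrix.one_mulVec]
    rw [← h1, ← Matrix.mulVec_mulVec, hv, Matrix.mulVec_zero]
  have hiff : ∀ j k : Fin d → ZMod n, M.mulVec (j - k) = 0 ↔ j = k := by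
    intro j k
    constructor
    · intro h; exact sub_eq_zero.mp (hinj _ h)
    · rintro rfl; rw [sub_self, Matrix.mulVec_zero]
  have hGiC : ((G (opos (n / b) M q i i) : ℝ) : ℂ) ≠ 0 := Complex.ofReal_ne_zero.mpr hG
  set u : (Fin d → ZMod n) → ℂ := fun j =>
    ((G (opos (n / b) M q i i) : ℝ) : ℂ)⁻¹ * ((G (opos (n / b) M q i j) : ℝ) : ℂ) * x' j
    with hu
  set f : (Fin d → ZMod n) → ℂ := fun a =>
    ∑ j ∈ univ.erase i, u j * fe n (fdot a (M.mulVec (j - i))) with hf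
  have hfdot0 : ∀ a : Fin d → ZMod n, fdot a (0 : Fin d → ZMod n) = 0 := by
    intro a; simp [fdot]
  have hstep : ∀ a : Fin d → ZMod n,
      ((G (opos (n / b) M q i i) : ℝ) : ℂ)⁻¹ * fe n (-(fdot a (M.mulVec i))) *
        (∑ j, ((G (opos (n / b) M q i j) : ℝ) : ℂ) * x' j * fe n (fdot a (M.mulVec j)))
        - x' i = f a := by
    intro a
    have hterm : ∀ j : Fin d → ZMod n,
        ((G (opos (n / b) M q i i) : ℝ) : ℂ)⁻¹ * fe n (-(fdot a (M.mulVec i))) *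
          (((G (opos (n / b) M q i j) : ℝ) : ℂ) * x' j * fe n (fdot a (M.mulVec j)))
          = u j * fe n (fdot a (M.mulVec (j - i))) := by
      intro j
      have h1 : fe n (-(fdot a (M.mulVec i))) * fe n (fdot a (M.mulVec j))
          = fe n (fdot a (M.mulVec (j - i))) := by
        rw [← fe_add]
        congr 1
        rw [Matrix.mulVec_sub, fdot_sub_right]
        ring
      rw [hu, ← h1]; ring
    rw [Finset.mul_sum, Finset.sum_congr rfl (fun j _ => hterm j),
      ← Finset.add_sum_erase _ _ (mem_univ i)]
    have hgi : u i * fe n (fdot a (M.mulVec (i - i))) = x' i := by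
      rw [sub_self, Matrix.mulVec_zero, hfdot0, fe_zero, mul_one, hu]
      field_simp
    rw [hgi, hf]
    ring
  have key : ∑ a : Fin d → ZMod n, f a * (starRingEnd ℂ) (f a)
      = (n : ℂ) ^ d * ∑ j ∈ univ.erase i, (Complex.normSq (u j) : ℂ) := by
    have expand : ∀ a : Fin d → ZMod n, f a * (starRingEnd ℂ) (f a)
        = ∑ j ∈ univ.erase i, ∑ k ∈ univ.erase i,
            (u j * (starRingEnd ℂ) (u k)) * fe n (fdot a (M.mulVec (j - k))) := by
      intro a
      rw [hf]
      simp only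
      rw [map_sum, Finset.sum_mul_sum]
      refine Finset.sum_congr rfl fun j _ => Finset.sum_congr rfl fun k _ => ?_
      rw [map_mul, conj_fe]
      have h1 : fe n (fdot a (M.mulVec (j - i))) * fe n (-(fdot a (M.mulVec (k - i))))
          = fe n (fdot a (M.mulVec (j - k))) := by
        rw [← fe_add]
        congr 1
        rw [Matrix.mulVec_sub, Matrix.mulVec_sub, Matrix.mulVec_sub,
          fdot_sub_right, fdot_sub_right, fdot_sub_right]
        ring
      rw [← h1]; ring
    rw [Finset.sum_congr rfl fun a _ => expand a, Finset.sum_comm]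
    have hswap : ∀ j : Fin d → ZMod n, j ∈ univ.erase i →
        (∑ a : Fin d → ZMod n, ∑ k ∈ univ.erase i,
            (u j * (starRingEnd ℂ) (u k)) * fe n (fdot a (M.mulVec (j - k))))
        = (n : ℂ) ^ d * (Complex.normSq (u j) : ℂ) := by
      intro j hj
      rw [Finset.sum_comm]
      have hk : ∀ k : Fin d → ZMod n, k ∈ univ.erase i →
          (∑ a : Fin d → ZMod n,
              (u j * (starRingEnd ℂ) (u k)) * fe n (fdot a (M.mulVec (j - k))))
          = if j = k then (u j * (starRingEnd ℂ) (u k)) * (n : ℂ) ^ d else 0 := by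
        intro k _
        rw [← Finset.mul_sum, sum_fe_fdot]
        by_cases hjk : j = k
        · rw [if_pos ((hiff j k).mpr hjk), if_pos hjk]
        · rw [if_neg (fun h => hjk ((hiff j k).mp h)), if_neg hjk, mul_zero]
      rw [Finset.sum_congr rfl hk, Finset.sum_ite_eq _ j _, if_pos hj,
        Complex.mul_conj]
      ring
    rw [Finset.sum_congr rfl hswap, ← Finset.mul_sum]
  have hcast : ∑ a : Fin d → ZMod n, Complex.normSq (f a)
      = (n : ℝ) ^ d * ∑ j ∈ univ.erase i, Complex.normSq (u j) := by
    have h1 : ((∑ a : Fin d → ZMod n, Complex.normSq (f a) : ℝ) : ℂ)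
        = (((n : ℝ) ^ d * ∑ j ∈ univ.erase i, Complex.normSq (u j) : ℝ) : ℂ) := by
      push_cast
      rw [← key]
      rw [Finset.sum_congr rfl fun a _ => (Complex.mul_conj (f a)).symm]
    exact_mod_cast h1
  have habs : ∀ a : Fin d → ZMod n,
      ‖(((G (opos (n / b) M q i i) : ℝ) : ℂ)⁻¹ * fe n (-(fdot a (M.mulVec i))) *
              (∑ j, ((G (opos (n / b) M q i j) : ℝ) : ℂ) * x' j * fe n (fdot a (M.mulVec j)))
            - x' i)‖ ^ 2 = Complex.normSq (f a) := by
    intro a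
    rw [hstep a, Complex.sq_norm]
  rw [Finset.sum_congr rfl fun a _ => habs a, hcast]
  have hnd : ((n : ℝ) ^ d) ≠ 0 := by
    have hpos : (0 : ℝ) < n := by exact_mod_cast Nat.pos_of_ne_zero (NeZero.ne n)
    positivity
  rw [mul_div_cancel_left₀ _ hnd]
  rw [Finset.mul_sum]
  refine Finset.sum_congr rfl fun j _ => ?_
  rw [hu]
  simp only
  rw [Complex.normSq_mul, Complex.normSq_mul, Complex.normSq_inv,
    Complex.normSq_ofReal, Complex.normSq_ofReal, ← Complex.sq_norm (x' j)]
  ring
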